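/- For every x > 0, ∫₀^∞ (1 - cos(x r)) f(r) dr ≥ (2/π²) ∫₀^∞ min(1, (x r)²) f(r) dr, for any non-increasing function f : (0,∞) → [0,∞). -/

import Mathlib

open MeasureTheory Set Real
open scoped ENNReal NNReal

private lemma aux_jordan {t : ℝ} (h0 : 0 ≤ t) (hπ : t ≤ π) :
    2 / π ^ 2 * t ^ 2 ≤ 1 - Real.cos t := by
  have hπ0 := Real.pi_pos
  have hs : t / π ≤ Real.sin (t / 2) := by
    have h := Real.mul_le_sin (x := t / 2) (by linarith) (by linarith)
    calc t / π = 2 / π * (t / 2) := by ring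
      _ ≤ _ := h
  have h1 := Real.sin_sq_add_cos_sq (t / 2)
  have h2 := Real.cos_sq (t / 2)
  have ht : 2 * (t / 2) = t := by ring
  rw [ht] at h2
  have hsq : (t / π) ^ 2 ≤ Real.sin (t / 2) ^ 2 := by
    have h0' : 0 ≤ t / π := by positivity
    nlinarith
  have hπ2 : (0:ℝ) < π ^ 2 := by positivity
  have : (t / π) ^ 2 = t ^ 2 / π ^ 2 := by ring
  rw [this] at hsq
  have : 2 / π ^ 2 * t ^ 2 = 2 * (t ^ 2 / π ^ 2) := by ring
  rw [this]
  nlinarith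

private lemma aux_scalar {s : ℝ} (h0 : 0 ≤ s) :
    2 / π ^ 2 * min s (s ^ 3 / 3) ≤ s - Real.sin s := by
  have hπ0 := Real.pi_pos
  have hπ3 : 3 < π := by have := Real.pi_gt_three; linarith
  have hss : s - Real.sin s = ∫ t in (0:ℝ)..s, (1 - Real.cos t) := by
    rw [intervalIntegral.integral_sub intervalIntegrable_const
        (Real.continuous_cos.intervalIntegrable 0 s),
      integral_cos, intervalIntegral.integral_const]
    simp
  rcases le_total s π with h | h
  · have key : 2 / π ^ 2 * (s ^ 3 / 3) ≤ s - Real.sin s := by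
      rw [hss]
      have heq : 2 / π ^ 2 * (s ^ 3 / 3) = ∫ t in (0:ℝ)..s, 2 / π ^ 2 * t ^ 2 := by
        rw [intervalIntegral.integral_const_mul, integral_pow]
        norm_num
      rw [heq]
      apply intervalIntegral.integral_mono_on h0
      · exact (continuous_const.mul (continuous_pow 2)).intervalIntegrable 0 s
      · exact (continuous_const.sub Real.continuous_cos).intervalIntegrable 0 s
      · exact fun t ht => aux_jordan ht.1 (le_trans ht.2 h)
    calc 2 / π ^ 2 * min s (s ^ 3 / 3) ≤ 2 / π ^ 2 * (s ^ 3 / 3) := by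
          apply mul_le_mul_of_nonneg_left (min_le_right _ _) (by positivity)
      _ ≤ _ := key
  · have hsin : Real.sin s ≤ 1 := Real.sin_le_one s
    have hmin : min s (s ^ 3 / 3) ≤ s := min_le_left _ _
    have hminnn : 0 ≤ min s (s ^ 3 / 3) := le_min h0 (by positivity)
    have hc : 2 / π ^ 2 * π ^ 2 = 2 := by field_simp
    have hπ2 : (0:ℝ) < π ^ 2 := by positivity
    have h1 : 2 / π ^ 2 * min s (s ^ 3 / 3) ≤ 2 / π ^ 2 * s :=
      mul_le_mul_of_nonneg_left hmin (by positivity)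
    have h2 : 2 / π ^ 2 * s ≤ s - 1 := by
      rw [div_mul_eq_mul_div, div_le_iff₀ hπ2]
      have h9 : (9:ℝ) < π ^ 2 := by nlinarith
      have hprod : 0 ≤ (s - 1) * (π ^ 2 - 9) :=
        mul_nonneg (by linarith) (by linarith)
      nlinarith
    linarith

private lemma aux_int_cos {x T : ℝ} (hx : 0 < x) (hT : 0 < T) :
    ∫⁻ r in Ioo (0:ℝ) T, ENNReal.ofReal (1 - Real.cos (x * r)) =
      ENNReal.ofReal (T - Real.sin (x * T) / x) := by
  have hcont : Continuous fun r : ℝ => 1 - Real.cos (x * r) := by continuity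
  rw [← ofReal_integral_eq_lintegral_ofReal
      ((hcont.integrableOn_Icc (a := 0) (b := T)).mono_set Ioo_subset_Icc_self)
      (ae_of_all _ fun r => sub_nonneg.2 (Real.cos_le_one _))]
  congr 1
  rw [← integral_Ioc_eq_integral_Ioo, ← intervalIntegral.integral_of_le hT.le]
  rw [intervalIntegral.integral_sub intervalIntegrable_const
      ((by continuity : Continuous fun r : ℝ => Real.cos (x * r)).intervalIntegrable 0 T)]
  have hcos : ∫ r in (0:ℝ)..T, Real.cos (x * r) = Real.sin (x * T) / x := by
    rw [intervalIntegral.integral_comp_mul_left (fun u => Real.cos u) hx.ne']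
    simp [integral_cos, smul_eq_mul]
    ring
  rw [hcos, intervalIntegral.integral_const]
  simp

private lemma aux_int_min {x T : ℝ} (hx : 0 < x) (hT : 0 < T) :
    ∫⁻ r in Ioo (0:ℝ) T, ENNReal.ofReal (min 1 ((x * r) ^ 2)) ≤
      ENNReal.ofReal (min T (x ^ 2 * T ^ 3 / 3)) := by
  rcases le_total T (x ^ 2 * T ^ 3 / 3) with h | h
  · rw [min_eq_left h]
    calc ∫⁻ r in Ioo (0:ℝ) T, ENNReal.ofReal (min 1 ((x * r) ^ 2))
        ≤ ∫⁻ _ in Ioo (0:ℝ) T, 1 := by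
          apply lintegral_mono fun r => ?_
          simpa using ENNReal.ofReal_le_ofReal (min_le_left _ _)
      _ = ENNReal.ofReal T := by
          simp [Real.volume_Ioo, hT.le]
  · rw [min_eq_right h]
    have hcont : Continuous fun r : ℝ => (x * r) ^ 2 := by continuity
    calc ∫⁻ r in Ioo (0:ℝ) T, ENNReal.ofReal (min 1 ((x * r) ^ 2))
        ≤ ∫⁻ r in Ioo (0:ℝ) T, ENNReal.ofReal ((x * r) ^ 2) :=
          lintegral_mono fun r => ENNReal.ofReal_le_ofReal (min_le_right _ _)
      _ = ENNReal.ofReal (x ^ 2 * T ^ 3 / 3) := by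
          rw [← ofReal_integral_eq_lintegral_ofReal
              ((hcont.integrableOn_Icc (a := 0) (b := T)).mono_set Ioo_subset_Icc_self)
              (ae_of_all _ fun r => sq_nonneg _)]
          congr 1
          rw [← integral_Ioc_eq_integral_Ioo, ← intervalIntegral.integral_of_le hT.le]
          have : ∀ r : ℝ, (x * r) ^ 2 = x ^ 2 * r ^ 2 := fun r => by ring
          simp_rw [this]
          rw [intervalIntegral.integral_const_mul, integral_pow]
          norm_num
          ring

private lemma aux_core {x T : ℝ} (hx : 0 < x) (hT : 0 < T) :
    ENNReal.ofReal (2 / π ^ 2) *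
        ∫⁻ r in Ioo (0:ℝ) T, ENNReal.ofReal (min 1 ((x * r) ^ 2)) ≤
      ∫⁻ r in Ioo (0:ℝ) T, ENNReal.ofReal (1 - Real.cos (x * r)) := by
  have hπ0 := Real.pi_pos
  calc ENNReal.ofReal (2 / π ^ 2) *
        ∫⁻ r in Ioo (0:ℝ) T, ENNReal.ofReal (min 1 ((x * r) ^ 2))
      ≤ ENNReal.ofReal (2 / π ^ 2) * ENNReal.ofReal (min T (x ^ 2 * T ^ 3 / 3)) :=
        mul_le_mul_right (aux_int_min hx hT) _
    _ = ENNReal.ofReal (2 / π ^ 2 * min T (x ^ 2 * T ^ 3 / 3)) :=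
        (ENNReal.ofReal_mul (by positivity)).symm
    _ ≤ ENNReal.ofReal (T - Real.sin (x * T) / x) := by
        apply ENNReal.ofReal_le_ofReal
        have hs := aux_scalar (s := x * T) (by positivity)
        have hmin : min T (x ^ 2 * T ^ 3 / 3) = x⁻¹ * min (x * T) ((x * T) ^ 3 / 3) := by
          rcases le_total T (x ^ 2 * T ^ 3 / 3) with h | h
          · rw [min_eq_left h, min_eq_left (by nlinarith), eq_comm]
            field_simp
          · rw [min_eq_right h, min_eq_right (by nlinarith)]
            field_simp
        rw [hmin]
        have : T - Real.sin (x * T) / x = x⁻¹ * (x * T - Real.sin (x * T)) := by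
          field_simp
        rw [this]
        calc 2 / π ^ 2 * (x⁻¹ * min (x * T) ((x * T) ^ 3 / 3))
            = x⁻¹ * (2 / π ^ 2 * min (x * T) ((x * T) ^ 3 / 3)) := by ring
          _ ≤ x⁻¹ * (x * T - Real.sin (x * T)) :=
            mul_le_mul_of_nonneg_left hs (by positivity)
    _ = ∫⁻ r in Ioo (0:ℝ) T, ENNReal.ofReal (1 - Real.cos (x * r)) :=
        (aux_int_cos hx hT).symm

private lemma aux_top {x : ℝ} (hx : 0 < x) :
    ∫⁻ r in Ioi (0:ℝ), ENNReal.ofReal (1 - Real.cos (x * r)) = ⊤ := by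
  apply ENNReal.eq_top_of_forall_nnreal_le
  intro c
  have hT : 0 < (c : ℝ) + 2 / x := by positivity
  calc (c : ℝ≥0∞)
      ≤ ENNReal.ofReal (((c : ℝ) + 2 / x) - Real.sin (x * ((c : ℝ) + 2 / x)) / x) := by
        rw [← ENNReal.ofReal_coe_nnreal]
        apply ENNReal.ofReal_le_ofReal
        have h1 : Real.sin (x * ((c : ℝ) + 2 / x)) / x ≤ 2 / x := by
          gcongr
          exact (Real.sin_le_one _).trans one_le_two
        linarith
    _ = ∫⁻ r in Ioo (0:ℝ) ((c : ℝ) + 2 / x), ENNReal.ofReal (1 - Real.cos (x * r)) :=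
        (aux_int_cos hx hT).symm
    _ ≤ ∫⁻ r in Ioi (0:ℝ), ENNReal.ofReal (1 - Real.cos (x * r)) :=
        lintegral_mono_set Ioo_subset_Ioi_self

private lemma aux_wd (g : ℝ → ℝ≥0∞) (hg : Measurable g) {A : Set ℝ} (hA : MeasurableSet A) :
    ((volume.restrict (Ioi (0:ℝ))).withDensity g) A = ∫⁻ r in A ∩ Ioi 0, g r := by
  rw [withDensity_apply _ hA, Measure.restrict_restrict hA]

theorem stmt0 (f : ℝ → ℝ) (hf_nonneg : ∀ r : ℝ, 0 < r → 0 ≤ f r)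
    (hf_anti : AntitoneOn f (Ioi 0)) (x : ℝ) (hx : 0 < x) :
    ENNReal.ofReal (2 / π ^ 2) *
        ∫⁻ r in Ioi (0 : ℝ), ENNReal.ofReal (min 1 ((x * r) ^ 2) * f r) ≤
      ∫⁻ r in Ioi (0 : ℝ), ENNReal.ofReal ((1 - Real.cos (x * r)) * f r) := by
  have hg₁m : Measurable fun r : ℝ => ENNReal.ofReal (1 - Real.cos (x * r)) :=
    (Continuous.measurable (by continuity)).ennreal_ofReal
  have hg₂m : Measurable fun r : ℝ => ENNReal.ofReal (min 1 ((x * r) ^ 2)) :=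
    (Continuous.measurable (continuous_const.min (by continuity))).ennreal_ofReal
  set μ := (volume.restrict (Ioi (0:ℝ))).withDensity
      (fun r => ENNReal.ofReal (1 - Real.cos (x * r))) with hμdef
  set ν := (volume.restrict (Ioi (0:ℝ))).withDensity
      (fun r => ENNReal.ofReal (min 1 ((x * r) ^ 2))) with hνdef
  have hfm : AEMeasurable f (volume.restrict (Ioi (0:ℝ))) :=
    aemeasurable_restrict_of_antitoneOn measurableSet_Ioi hf_anti
  have hfnn : ∀ᵐ r ∂(volume.restrict (Ioi (0:ℝ))), 0 ≤ f r :=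
    (ae_restrict_iff' measurableSet_Ioi).2 (ae_of_all _ hf_nonneg)
  have hac₁ : μ ≪ volume.restrict (Ioi (0:ℝ)) := withDensity_absolutelyContinuous _ _
  have hac₂ : ν ≪ volume.restrict (Ioi (0:ℝ)) := withDensity_absolutelyContinuous _ _
  have hL : ∫⁻ r in Ioi (0:ℝ), ENNReal.ofReal ((1 - Real.cos (x * r)) * f r)
      = ∫⁻ r, ENNReal.ofReal (f r) ∂μ := by
    rw [hμdef, lintegral_withDensity_eq_lintegral_mul_non_measurable _ hg₁m
      (ae_of_all _ fun r => ENNReal.ofReal_lt_top)]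
    refine lintegral_congr fun r => ?_
    simp only [Pi.mul_apply]
    rw [← ENNReal.ofReal_mul (sub_nonneg.2 (Real.cos_le_one _))]
  have hR : ∫⁻ r in Ioi (0:ℝ), ENNReal.ofReal (min 1 ((x * r) ^ 2) * f r)
      = ∫⁻ r, ENNReal.ofReal (f r) ∂ν := by
    rw [hνdef, lintegral_withDensity_eq_lintegral_mul_non_measurable _ hg₂m
      (ae_of_all _ fun r => ENNReal.ofReal_lt_top)]
    refine lintegral_congr fun r => ?_
    simp only [Pi.mul_apply]
    rw [← ENNReal.ofReal_mul (le_min zero_le_one (sq_nonneg _))]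
  rw [hL, hR,
    lintegral_eq_lintegral_meas_lt μ (hac₁.ae_le hfnn) (hfm.mono_ac hac₁),
    lintegral_eq_lintegral_meas_lt ν (hac₂.ae_le hfnn) (hfm.mono_ac hac₂),
    ← lintegral_const_mul' _ _ ENNReal.ofReal_ne_top]
  apply lintegral_mono fun t => ?_
  -- key step : compare ν and μ on the super-level set S
  set S : Set ℝ := {a : ℝ | t < f a} with hSdef
  have hS : ∀ r ∈ S ∩ Ioi (0:ℝ), ∀ r' ∈ Ioi (0:ℝ), r' ≤ r → r' ∈ S :=
    fun r hr r' hr' hle => lt_of_lt_of_le hr.1 (hf_anti hr' hr.2 hle)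
  have hν_compl : ν ((Ioi (0:ℝ))ᶜ) = 0 := by
    rw [hνdef, aux_wd _ hg₂m measurableSet_Ioi.compl, compl_inter_self,
      Measure.restrict_empty, lintegral_zero_measure]
  by_cases hb : BddAbove (S ∩ Ioi (0:ℝ))
  · rcases eq_empty_or_nonempty (S ∩ Ioi (0:ℝ)) with he | hne
    · have : ν S = 0 := by
        refine measure_mono_null ?_ hν_compl
        intro r hr
        by_contra hrpos
        exact (eq_empty_iff_forall_notMem.1 he r) ⟨hr, not_not.1 hrpos⟩
      rw [this, mul_zero]
      exact zero_le
    · set T := sSup (S ∩ Ioi (0:ℝ)) with hTdef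
      obtain ⟨s₀, hs₀⟩ := hne
      have hT0 : 0 < T := lt_of_lt_of_le hs₀.2 (le_csSup hb hs₀)
      have hsub₁ : Ioo (0:ℝ) T ⊆ S := by
        intro r hr
        obtain ⟨s, hs, hrs⟩ := exists_lt_of_lt_csSup ⟨s₀, hs₀⟩ hr.2
        exact hS s hs r hr.1 hrs.le
      have hsub₂ : S ⊆ Ioo (0:ℝ) T ∪ {T} ∪ (Ioi (0:ℝ))ᶜ := by
        intro r hr
        by_cases hrpos : 0 < r
        · have hrT : r ≤ T := le_csSup hb ⟨hr, hrpos⟩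
          rcases lt_or_eq_of_le hrT with h | h
          · exact Or.inl (Or.inl ⟨hrpos, h⟩)
          · exact Or.inl (Or.inr h)
        · exact Or.inr hrpos
      have hνT : ν {T} = 0 := by
        refine hac₂ ?_
        rw [Measure.restrict_apply (measurableSet_singleton T)]
        exact measure_mono_null inter_subset_left Real.volume_singleton
      have hνS : ν S ≤ ∫⁻ r in Ioo (0:ℝ) T, ENNReal.ofReal (min 1 ((x * r) ^ 2)) := by
        calc ν S ≤ ν (Ioo (0:ℝ) T ∪ {T} ∪ (Ioi (0:ℝ))ᶜ) := measure_mono hsub₂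
          _ ≤ ν (Ioo (0:ℝ) T ∪ {T}) + ν ((Ioi (0:ℝ))ᶜ) := measure_union_le _ _
          _ ≤ ν (Ioo (0:ℝ) T) + ν {T} + ν ((Ioi (0:ℝ))ᶜ) :=
            add_le_add_left (measure_union_le _ _) _
          _ = ν (Ioo (0:ℝ) T) := by rw [hνT, hν_compl, add_zero, add_zero]
          _ = ∫⁻ r in Ioo (0:ℝ) T, ENNReal.ofReal (min 1 ((x * r) ^ 2)) := by
            rw [hνdef, aux_wd _ hg₂m measurableSet_Ioo,
              inter_eq_self_of_subset_left Ioo_subset_Ioi_self]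
      have hμS : ∫⁻ r in Ioo (0:ℝ) T, ENNReal.ofReal (1 - Real.cos (x * r)) ≤ μ S := by
        rw [hμdef, ← inter_eq_self_of_subset_left (Ioo_subset_Ioi_self (a := T) (b := (0:ℝ))),
          ← aux_wd _ hg₁m measurableSet_Ioo]
        exact measure_mono hsub₁
      calc ENNReal.ofReal (2 / π ^ 2) * ν S
          ≤ ENNReal.ofReal (2 / π ^ 2) *
            ∫⁻ r in Ioo (0:ℝ) T, ENNReal.ofReal (min 1 ((x * r) ^ 2)) :=
            mul_le_mul_right hνS _
        _ ≤ ∫⁻ r in Ioo (0:ℝ) T, ENNReal.ofReal (1 - Real.cos (x * r)) := aux_core hx hT0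
        _ ≤ μ S := hμS
  · have hIoi : Ioi (0:ℝ) ⊆ S := by
      intro r hr
      obtain ⟨s, hs, hrs⟩ := not_bddAbove_iff.1 hb r
      exact hS s hs r hr hrs.le
    have : μ S = ⊤ := by
      rw [eq_top_iff]
      calc (⊤ : ℝ≥0∞) = ∫⁻ r in Ioi (0:ℝ), ENNReal.ofReal (1 - Real.cos (x * r)) :=
            (aux_top hx).symm
        _ = μ (Ioi (0:ℝ)) := by
            rw [hμdef, aux_wd _ hg₁m measurableSet_Ioi, inter_self]
        _ ≤ μ S := measure_mono hIoi
    rw [this]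
    exact le_top
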